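/- Let x ∈ ℝⁿ and suppose ω ↦ Q(x,ξ(ω)) is integrable (so in particular Q(x,ξ) < +∞ almost surely). Let 𝒫 be a finite measurable partition of Ξ with V_𝒫(x) = V(x). Then for every P ∈ 𝒫 with ℙ[ξ ∈ P] > 0 there exists λ_P ∈ D such that ⟨h − Tx, λ_P⟩ = Q(x, ξ(ω)) for ℙ-almost every ω with ξ(ω) = (T,h) ∈ P. -/

import Mathlib

open MeasureTheory
open scoped BigOperators Classical

noncomputable section

/-- The space of alea `Ξ = ℝ^{l×n} × ℝ^l`: pairs `ξ = (T, h)`. -/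
abbrev Xi (l n : ℕ) := (Fin l → Fin n → ℝ) × (Fin l → ℝ)

/-- The dual admissible polyhedron `D = {λ : Wᵀλ ≤ q}`. -/
def polyD {l m : ℕ} (W : Fin l → Fin m → ℝ) (q : Fin m → ℝ) : Set (Fin l → ℝ) :=
  {lam | ∀ j, (∑ i, W i j * lam i) ≤ q j}

/-- Recourse cost `Q(x, ξ) = sup_{λ ∈ D} ⟨h - Tx, λ⟩ ∈ ℝ ∪ {+∞}` (as an `EReal`). -/
def Qfun {l n m : ℕ} (W : Fin l → Fin m → ℝ) (q : Fin m → ℝ)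
    (x : Fin n → ℝ) (ξ : Xi l n) : EReal :=
  ⨆ lam ∈ polyD W q, ((∑ i, (ξ.2 i - ∑ j, ξ.1 i j * x j) * lam i : ℝ) : EReal)

/-- A finite measurable partition of `α`, given as a `Finset` of sets. -/
def IsFinPartition {α : Type*} [MeasurableSpace α] (Ps : Finset (Set α)) : Prop :=
  (∀ P ∈ Ps, MeasurableSet P) ∧ ((Ps : Set (Set α)).PairwiseDisjoint id) ∧
    ⋃₀ (Ps : Set (Set α)) = Set.univ

/-- Conditional expectation `E[ξ | ξ ∈ P] = E[ξ 1_{ξ ∈ P}] / ℙ[ξ ∈ P]`. -/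
def condMean {Ω : Type*} [MeasurableSpace Ω] {l n : ℕ} (ℙ : Measure Ω)
    (ξ : Ω → Xi l n) (P : Set (Xi l n)) : Xi l n :=
  (ℙ (ξ ⁻¹' P)).toReal⁻¹ • ∫ ω in ξ ⁻¹' P, ξ ω ∂ℙ

/-- Expected cost-to-go of a partition: `V_Ps(x) = Σ_{P ∈ Ps, ℙ[ξ∈P] > 0} ℙ[ξ∈P] Q(x, E[ξ|P])`. -/
def Vpart {Ω : Type*} [MeasurableSpace Ω] {l n m : ℕ} (W : Fin l → Fin m → ℝ)
    (q : Fin m → ℝ) (ℙ : Measure Ω) (ξ : Ω → Xi l n) (Ps : Finset (Set (Xi l n)))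
    (x : Fin n → ℝ) : EReal :=
  ∑ P ∈ Ps, if 0 < ℙ (ξ ⁻¹' P) then
    ((ℙ (ξ ⁻¹' P)).toReal : EReal) * Qfun W q x (condMean ℙ ξ P) else 0

/-- True expected cost-to-go `V(x) = E[Q(x, ξ)] ∈ ℝ ∪ {+∞}`: the real integral when
`Q(x, ξ)` is integrable (a.e. finite with integrable real part), `+∞` otherwise. -/
def Vtrue {Ω : Type*} [MeasurableSpace Ω] {l n m : ℕ} (W : Fin l → Fin m → ℝ)
    (q : Fin m → ℝ) (ℙ : Measure Ω) (ξ : Ω → Xi l n) (x : Fin n → ℝ) : EReal :=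
  if (∀ᵐ ω ∂ℙ, Qfun W q x (ξ ω) ≠ ⊤) ∧
      Integrable (fun ω => (Qfun W q x (ξ ω)).toReal) ℙ then
    (((∫ ω, (Qfun W q x (ξ ω)).toReal ∂ℙ) : ℝ) : EReal)
  else ⊤

/-- `Ps` ℙ-refines `ℛ`: every `P ∈ Ps` is ℙ-essentially contained in some `R ∈ ℛ`. -/
def PRefines {Ω : Type*} [MeasurableSpace Ω] {l n : ℕ} (ℙ : Measure Ω) (ξ : Ω → Xi l n)
    (Ps ℛ : Finset (Set (Xi l n))) : Prop :=
  ∀ P ∈ Ps, ∃ R ∈ ℛ, ℙ (ξ ⁻¹' (P ∩ R)) = ℙ (ξ ⁻¹' P)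

/-- Conditional expectation `E[Q(x,ξ) | ξ ∈ P] ∈ ℝ ∪ {+∞}`: equal to
`E[Q(x,ξ) 1_{ξ∈P}] / ℙ[ξ∈P]` when `Q(x,ξ) 1_{ξ∈P}` is integrable, `+∞` otherwise. -/
def condQ {Ω : Type*} [MeasurableSpace Ω] {l n m : ℕ} (W : Fin l → Fin m → ℝ)
    (q : Fin m → ℝ) (ℙ : Measure Ω) (ξ : Ω → Xi l n) (x : Fin n → ℝ)
    (P : Set (Xi l n)) : EReal :=
  if (∀ᵐ ω ∂ℙ, ξ ω ∈ P → Qfun W q x (ξ ω) ≠ ⊤) ∧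
      IntegrableOn (fun ω => (Qfun W q x (ξ ω)).toReal) (ξ ⁻¹' P) ℙ then
    (((ℙ (ξ ⁻¹' P)).toReal⁻¹ * ∫ ω in ξ ⁻¹' P, (Qfun W q x (ξ ω)).toReal ∂ℙ : ℝ) : EReal)
  else ⊤

/-- Subdifferential of an `EReal`-valued function at `x`. -/
def SubDiff {n : ℕ} (f : (Fin n → ℝ) → EReal) (x : Fin n → ℝ) : Set (Fin n → ℝ) :=
  {g | ∀ y, f x + ((∑ i, g i * (y i - x i) : ℝ) : EReal) ≤ f y}

section AuxPolyhedral

lemma conic_caratheodory {E : Type*} [AddCommGroup E] [Module ℝ E] {N : ℕ} (w : Fin N → E) :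
    ∀ (k : ℕ) (y : Fin N → ℝ), (Finset.univ.filter fun j => y j ≠ 0).card ≤ k →
      (∀ j, 0 ≤ y j) →
    ∃ z : Fin N → ℝ, (∀ j, 0 ≤ z j) ∧ (∀ j, z j ≠ 0 → y j ≠ 0) ∧
      (∀ g : Fin N → ℝ, (∀ j, g j ≠ 0 → z j ≠ 0) → ∑ j, g j • w j = 0 → g = 0) ∧
      ∑ j, z j • w j = ∑ j, y j • w j := by
  intro k
  induction k with
  | zero =>
    intro y hcard hy
    have hy0 : ∀ j, y j = 0 := by
      intro j
      by_contra hj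
      have hmem : j ∈ Finset.univ.filter fun j => y j ≠ 0 := by simp [hj]
      have := Finset.card_pos.mpr ⟨j, hmem⟩
      omega
    refine ⟨y, hy, fun j h => h, fun g hg _ => ?_, rfl⟩
    funext j
    by_contra hj
    have := hg j hj
    rw [hy0] at this
    exact this rfl
  | succ k ih =>
    intro y hcard hy
    by_cases H : ∀ g : Fin N → ℝ, (∀ j, g j ≠ 0 → y j ≠ 0) → ∑ j, g j • w j = 0 → g = 0
    · exact ⟨y, hy, fun j h => h, H, rfl⟩
    · push_neg at H
      obtain ⟨g, hgsupp, hgsum, hgne⟩ := H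
      -- make sure there's a positive coordinate
      obtain ⟨g', hg'supp, hg'sum, hg'pos⟩ :
          ∃ g' : Fin N → ℝ, (∀ j, g' j ≠ 0 → y j ≠ 0) ∧ (∑ j, g' j • w j = 0) ∧
            ∃ j, 0 < g' j := by
        by_cases hpos : ∃ j, 0 < g j
        · exact ⟨g, hgsupp, hgsum, hpos⟩
        · push_neg at hpos
          obtain ⟨j1, hj1⟩ : ∃ j, g j ≠ 0 := by
            by_contra h; push_neg at h; exact hgne (funext h)
          refine ⟨-g, fun j hj => hgsupp j (by simpa using hj), by
            simp only [Pi.neg_apply, neg_smul, Finset.sum_neg_distrib, hgsum, neg_zero], ?_⟩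
          exact ⟨j1, by simpa using lt_of_le_of_ne (hpos j1) hj1⟩
      classical
      set Pos := Finset.univ.filter fun j => 0 < g' j with hPos
      have hPosne : Pos.Nonempty := by
        obtain ⟨j, hj⟩ := hg'pos; exact ⟨j, by simp [hPos, hj]⟩
      obtain ⟨j0, hj0mem, hmin⟩ := Finset.exists_min_image Pos (fun j => y j / g' j) hPosne
      have hj0pos : 0 < g' j0 := by simpa [hPos] using hj0mem
      set t := y j0 / g' j0 with ht
      have ht0 : 0 ≤ t := div_nonneg (hy j0) hj0pos.le
      set y' := fun j => y j - t * g' j with hy'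
      have hy'nonneg : ∀ j, 0 ≤ y' j := by
        intro j
        by_cases hj : 0 < g' j
        · have := hmin j (by simp [hPos, hj])
          have : t * g' j ≤ y j := by
            rw [ht]
            calc y j0 / g' j0 * g' j ≤ y j / g' j * g' j := by
                  exact mul_le_mul_of_nonneg_right this hj.le
            _ = y j := by field_simp
          simpa [hy'] using sub_nonneg.mpr this
        · push_neg at hj
          have : t * g' j ≤ 0 := mul_nonpos_of_nonneg_of_nonpos ht0 hj
          simp only [hy']
          linarith [hy j]
      have hy'supp : ∀ j, y' j ≠ 0 → y j ≠ 0 := by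
        intro j hj
        by_contra hyj
        have hgj : g' j = 0 := by
          by_contra hgj; exact (hg'supp j hgj) hyj
        simp [hy', hyj, hgj] at hj
      have hy'j0 : y' j0 = 0 := by
        simp only [hy', ht]
        field_simp
        ring
      have hcard' : (Finset.univ.filter fun j => y' j ≠ 0).card ≤ k := by
        have hsub : (Finset.univ.filter fun j => y' j ≠ 0) ⊆
            (Finset.univ.filter fun j => y j ≠ 0).erase j0 := by
          intro j hj
          simp only [Finset.mem_filter, Finset.mem_univ, true_and] at hj
          refine Finset.mem_erase.mpr ⟨?_, by simp [hy'supp j hj]⟩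
          rintro rfl; exact hj hy'j0
        have hj0in : j0 ∈ Finset.univ.filter fun j => y j ≠ 0 := by
          simp [hg'supp j0 hj0pos.ne']
        have := Finset.card_le_card hsub
        have := Finset.card_erase_of_mem hj0in
        omega
      have hsum' : ∑ j, y' j • w j = ∑ j, y j • w j := by
        simp only [hy', sub_smul, Finset.sum_sub_distrib, mul_smul]
        rw [← Finset.smul_sum, hg'sum, smul_zero, sub_zero]
      obtain ⟨z, hz1, hz2, hz3, hz4⟩ := ih y' hcard' hy'nonneg
      exact ⟨z, hz1, fun j hj => hy'supp j (hz2 j hj), hz3, hz4.trans hsum'⟩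

section ConeClosed

variable {E : Type*} [NormedAddCommGroup E] [NormedSpace ℝ E] [FiniteDimensional ℝ E]

noncomputable def coneLM {N : ℕ} (w : Fin N → E) (S : Finset (Fin N)) :
    ((↥S : Type) → ℝ) →ₗ[ℝ] E where
  toFun y := ∑ j : ↥S, y j • w ↑j
  map_add' y y' := by simp [add_smul, Finset.sum_add_distrib]
  map_smul' c y := by
    simp only [Pi.smul_apply, smul_eq_mul, RingHom.id_apply, mul_smul, ← Finset.smul_sum]

theorem isClosed_coneFG {N : ℕ} (w : Fin N → E) :
    IsClosed {z : E | ∃ y : Fin N → ℝ, (∀ j, 0 ≤ y j) ∧ z = ∑ j, y j • w j} := by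
  classical
  -- extension-by-zero sum identity
  have hext : ∀ (S : Finset (Fin N)) (y : (↥S : Type) → ℝ),
      ∑ j, (fun j => if h : j ∈ S then y ⟨j, h⟩ else 0) j • w j = ∑ j : ↥S, y j • w ↑j := by
    intro S y
    rw [← Finset.sum_subset S.subset_univ (fun j _ hj => by simp [dif_neg hj])]
    rw [← Finset.sum_attach S (fun j => (if h : j ∈ S then y ⟨j, h⟩ else 0) • w j)]
    rw [Finset.univ_eq_attach]
    refine Finset.sum_congr rfl fun j _ => ?_
    rw [dif_pos j.2]
  have hmain : {z : E | ∃ y : Fin N → ℝ, (∀ j, 0 ≤ y j) ∧ z = ∑ j, y j • w j} =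
      ⋃ (S : {S : Finset (Fin N) // Function.Injective (coneLM w S)}),
        (coneLM w S.1) '' {y | ∀ j, 0 ≤ y j} := by
    ext z
    constructor
    · rintro ⟨y, hy, rfl⟩
      obtain ⟨c, hc0, hcsupp, hcind, hcsum⟩ :=
        conic_caratheodory w (Finset.univ.filter fun j => y j ≠ 0).card y le_rfl hy
      set S := Finset.univ.filter fun j => c j ≠ 0 with hS
      have hinj : Function.Injective (coneLM w S) := by
        rw [injective_iff_map_eq_zero]
        intro g hg
        have hGsum : ∑ j, (fun j => if h : j ∈ S then g ⟨j, h⟩ else 0) j • w j = 0 := by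
          rw [hext S g]; exact hg
        have hG0 : (fun j => if h : j ∈ S then g ⟨j, h⟩ else 0) = 0 := by
          refine hcind _ (fun j hj => ?_) hGsum
          by_cases hjS : j ∈ S
          · simp only [hS, Finset.mem_filter] at hjS
            exact hjS.2
          · simp [dif_neg hjS] at hj
        funext j
        have := congrFun hG0 ↑j
        simpa [dif_pos j.2] using this
      rw [Set.mem_iUnion]
      refine ⟨⟨S, hinj⟩, fun j => c ↑j, fun j => hc0 ↑j, ?_⟩
      rw [← hcsum]
      rw [show (coneLM w S) (fun j => c ↑j) = ∑ j : ↥S, c ↑j • w ↑j from rfl]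
      rw [← hext S (fun j => c ↑j)]
      refine Finset.sum_congr rfl fun j _ => ?_
      by_cases hjS : j ∈ S
      · simp [hjS]
      · have hc : c j = 0 := by
          by_contra h; exact hjS (by simp [hS, h])
        simp [dif_neg hjS, hc]
    · intro hz
      simp only [Set.mem_iUnion, Set.mem_image] at hz
      obtain ⟨S, y, hy, hz⟩ := hz
      refine ⟨fun j => if h : j ∈ S.1 then y ⟨j, h⟩ else 0, fun j => ?_, ?_⟩
      · by_cases hjS : j ∈ S.1
        · simp only [dif_pos hjS]; exact hy _
        · simp [dif_neg hjS]
      · rw [← hz]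
        exact (hext S.1 y).symm
  rw [hmain]
  refine isClosed_iUnion_of_finite fun S => ?_
  have hK : IsClosed {y : (↥S.1 : Type) → ℝ | ∀ j, 0 ≤ y j} := by
    have : {y : (↥S.1 : Type) → ℝ | ∀ j, 0 ≤ y j} = ⋂ j, {y | 0 ≤ y j} := by
      ext y; simp [Set.mem_iInter]
    rw [this]
    exact isClosed_iInter fun j => isClosed_le continuous_const (continuous_apply j)
  have hker : LinearMap.ker (coneLM w S.1) = ⊥ := LinearMap.ker_eq_bot.mpr S.2
  exact ((coneLM w S.1).isClosedEmbedding_of_injective hker).isClosedMap _ hK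

end ConeClosed

theorem farkas_cert {d k : ℕ} (A : Fin k → Fin d → ℝ) (b : Fin k → ℝ)
    (hinfeas : ¬ ∃ lam : Fin d → ℝ, ∀ j, ∑ i, A j i * lam i ≤ b j) :
    ∃ y : Fin k → ℝ, (∀ j, 0 ≤ y j) ∧ (∀ i, ∑ j, y j * A j i = 0) ∧ ∑ j, y j * b j < 0 := by
  classical
  set w : Fin (k + 1) → ((Fin d → ℝ) × ℝ) := Fin.snoc (fun j => (A j, b j)) ((0 : Fin d → ℝ), (1 : ℝ)) with hw
  set C : Set ((Fin d → ℝ) × ℝ) := {z : (Fin d → ℝ) × ℝ | ∃ y : Fin (k + 1) → ℝ, (∀ j, 0 ≤ y j) ∧ z = ∑ j, y j • w j}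
    with hC
  have hCmem : ∀ (y : Fin (k+1) → ℝ), (∀ j, 0 ≤ y j) → (∑ j, y j • w j) ∈ C :=
    fun y hy => ⟨y, hy, rfl⟩
  have hzero : (0 : (Fin d → ℝ) × ℝ) ∈ C := by
    refine ⟨0, fun j => le_rfl, ?_⟩
    simp
  have hsmul : ∀ (r : ℝ), 0 ≤ r → ∀ z ∈ C, r • z ∈ C := by
    rintro r hr z ⟨y, hy, rfl⟩
    refine ⟨fun j => r * y j, fun j => mul_nonneg hr (hy j), ?_⟩
    rw [Finset.smul_sum]
    exact Finset.sum_congr rfl fun j _ => (mul_smul r (y j) (w j)).symm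
  have hconv : Convex ℝ C := by
    rintro z ⟨y, hy, rfl⟩ z' ⟨y', hy', rfl⟩ a b' ha hb' hab
    refine ⟨fun j => a * y j + b' * y' j,
      fun j => add_nonneg (mul_nonneg ha (hy j)) (mul_nonneg hb' (hy' j)), ?_⟩
    rw [Finset.smul_sum, Finset.smul_sum, ← Finset.sum_add_distrib]
    refine Finset.sum_congr rfl fun j _ => ?_
    rw [add_smul, mul_smul, mul_smul]
  have hclosed : IsClosed C := isClosed_coneFG w
  by_cases hmem : ((0 : Fin d → ℝ), (-1 : ℝ)) ∈ C
  · obtain ⟨y, hy, heq⟩ := hmem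
    rw [Fin.sum_univ_castSucc] at heq
    simp only [hw, Fin.snoc_castSucc, Fin.snoc_last] at heq
    have h1 : (0 : Fin d → ℝ) = ∑ j : Fin k, y j.castSucc • A j := by
      have := congrArg Prod.fst heq
      simpa [Prod.fst_sum, Prod.smul_mk] using this
    have h2 : (-1 : ℝ) = ∑ j : Fin k, y j.castSucc • b j + y (Fin.last k) := by
      have := congrArg Prod.snd heq
      simpa [Prod.snd_sum, Prod.smul_mk, smul_eq_mul] using this
    refine ⟨fun j => y j.castSucc, fun j => hy _, fun i => ?_, ?_⟩
    · have := congrFun h1 i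
      simp only [Finset.sum_apply, Pi.smul_apply, smul_eq_mul, Pi.zero_apply] at this
      linarith [this]
    · have hlast : 0 ≤ y (Fin.last k) := hy _
      simp only [smul_eq_mul] at h2
      have : ∑ j : Fin k, y j.castSucc * b j = -1 - y (Fin.last k) := by linarith
      rw [this]; linarith
  · obtain ⟨f, u, hfC, hfx⟩ := geometric_hahn_banach_closed_point hconv hclosed hmem
    have hu0 : 0 < u := by simpa [map_zero] using hfC 0 hzero
    have hle : ∀ z ∈ C, f z ≤ 0 := by
      intro z hz
      by_contra hpos
      push_neg at hpos
      have hr : (0:ℝ) ≤ (u + 1) / f z := div_nonneg (by linarith) hpos.le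
      have := hfC _ (hsmul _ hr z hz)
      rw [ContinuousLinearMap.map_smul, smul_eq_mul, div_mul_cancel₀ _ hpos.ne'] at this
      linarith
    have hwmem : ∀ j, w j ∈ C := by
      intro j
      have hsum : ∑ j', (if j' = j then (1:ℝ) else 0) • w j' = w j := by
        rw [Finset.sum_eq_single j]
        · simp
        · intro j' _ hne; simp [hne]
        · intro h; exact absurd (Finset.mem_univ j) h
      exact hsum ▸ hCmem _ (fun j' => by split <;> norm_num)
    have hA : ∀ j : Fin k, f (A j, b j) ≤ 0 := by
      intro j
      have := hle (w j.castSucc) (hwmem _)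
      simpa [hw, Fin.snoc_castSucc] using this
    set t := f ((0 : Fin d → ℝ), (1:ℝ)) with htdef
    have ht : t ≤ 0 := by
      have := hle (w (Fin.last k)) (hwmem _)
      simpa [hw, Fin.snoc_last, htdef] using this
    have htneg : t < 0 := by
      have hneg : ((0 : Fin d → ℝ), (-1:ℝ)) = -((0 : Fin d → ℝ), (1:ℝ)) := by
        rw [Prod.neg_mk, neg_zero]
      have : f ((0 : Fin d → ℝ), (-1:ℝ)) = -t := by rw [hneg, map_neg, htdef]
      rw [this] at hfx
      linarith
    have hdecomp : ∀ (a : Fin d → ℝ) (β : ℝ),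
        f (a, β) = (∑ i, a i * f (Pi.single i 1, 0)) + β * t := by
      intro a β
      have h1 : ((a, β) ) = ((a, (0:ℝ))) + (((0 : Fin d → ℝ), β)) := by
        rw [Prod.mk_add_mk, add_zero, zero_add]
      have h2 : ((a, (0:ℝ)) : (Fin d → ℝ) × ℝ) = ∑ i, a i • (((Pi.single i (1:ℝ) : Fin d → ℝ), (0:ℝ)) : (Fin d → ℝ) × ℝ) := by
        refine Prod.ext ?_ ?_
        · simp only [Prod.fst_sum, Prod.smul_mk]
          funext i'
          simp [Finset.sum_apply, Pi.single_apply, mul_ite]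
        · simp [Prod.snd_sum, Prod.smul_mk]
      have h3 : (((0 : Fin d → ℝ), β) : (Fin d → ℝ) × ℝ) = β • (((0 : Fin d → ℝ), (1:ℝ)) : (Fin d → ℝ) × ℝ) := by
        rw [Prod.smul_mk, smul_zero, smul_eq_mul, mul_one]
      rw [h1, map_add, h2, map_sum, h3, ContinuousLinearMap.map_smul]
      simp only [ContinuousLinearMap.map_smul, smul_eq_mul, htdef]
    have hfeas : ∃ lam : Fin d → ℝ, ∀ j, ∑ i, A j i * lam i ≤ b j := by
      refine ⟨fun i => f (Pi.single i 1, 0) / (-t), fun j => ?_⟩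
      have h := hA j
      rw [hdecomp (A j) (b j)] at h
      have h' : ∑ i, A j i * f (Pi.single i 1, 0) ≤ b j * (-t) := by linarith
      have hpos : 0 < -t := by linarith
      calc ∑ i, A j i * (f (Pi.single i 1, 0) / (-t))
          = (∑ i, A j i * f (Pi.single i 1, 0)) / (-t) := by
            rw [Finset.sum_div]
            exact Finset.sum_congr rfl fun i _ => (mul_div_assoc _ _ _).symm
        _ ≤ (b j * (-t)) / (-t) := (div_le_div_iff_of_pos_right hpos).mpr h'
        _ = b j := mul_div_cancel_right₀ _ hpos.ne'
    exact absurd hfeas hinfeas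

theorem polyD_exists_max {l m : ℕ} (W : Fin l → Fin m → ℝ) (q : Fin m → ℝ)
    (hD : (polyD W q).Nonempty) (c : Fin l → ℝ) (B : ℝ)
    (hB : ∀ lam ∈ polyD W q, ∑ i, c i * lam i ≤ B) :
    ∃ lam0 ∈ polyD W q, ∀ lam ∈ polyD W q, ∑ i, c i * lam i ≤ ∑ i, c i * lam0 i := by
  classical
  set Svals : Set ℝ := (fun lam => ∑ i, c i * lam i) '' (polyD W q) with hSvals
  have hSne : Svals.Nonempty := hD.image _
  have hSbdd : BddAbove Svals := ⟨B, by rintro s ⟨lam, hlam, rfl⟩; exact hB lam hlam⟩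
  set v := sSup Svals with hv
  -- the augmented system is feasible
  have hfeas : ∃ lam ∈ polyD W q, v ≤ ∑ i, c i * lam i := by
    by_contra hcon
    push_neg at hcon
    set A : Fin (m + 1) → Fin l → ℝ := Fin.snoc (fun j i => W i j) (fun i => -c i) with hA
    set b : Fin (m + 1) → ℝ := Fin.snoc q (-v) with hb
    have hinfeas : ¬ ∃ lam : Fin l → ℝ, ∀ j, ∑ i, A j i * lam i ≤ b j := by
      rintro ⟨lam, hlam⟩
      have hmem : lam ∈ polyD W q := by
        intro j
        have := hlam j.castSucc
        simpa [hA, hb, Fin.snoc_castSucc] using this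
      have hlast := hlam (Fin.last m)
      simp only [hA, hb, Fin.snoc_last] at hlast
      have : v ≤ ∑ i, c i * lam i := by
        have : -(∑ i, c i * lam i) ≤ -v := by
          calc -(∑ i, c i * lam i) = ∑ i, (-c i) * lam i := by
                rw [← Finset.sum_neg_distrib]
                exact Finset.sum_congr rfl fun i _ => (neg_mul _ _).symm
          _ ≤ -v := hlast
        linarith
      exact absurd this (not_le.mpr (hcon lam hmem |> lt_of_le_of_lt (le_refl _) |> id) )
    obtain ⟨y, hy0, hyA, hyb⟩ := farkas_cert A b hinfeas
    set t := y (Fin.last m) with ht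
    have ht0 : 0 ≤ t := hy0 _
    have hyA' : ∀ i, ∑ j : Fin m, y j.castSucc * W i j = t * c i := by
      intro i
      have := hyA i
      rw [Fin.sum_univ_castSucc] at this
      simp only [hA, Fin.snoc_castSucc, Fin.snoc_last] at this
      linarith [this]
    have hyb' : ∑ j : Fin m, y j.castSucc * q j < t * v := by
      have := hyb
      rw [Fin.sum_univ_castSucc] at this
      simp only [hb, Fin.snoc_castSucc, Fin.snoc_last] at this
      linarith [this]
    -- key: for all lam in D, t * (c·lam) ≤ ∑ y q
    have hkey : ∀ lam ∈ polyD W q, t * (∑ i, c i * lam i) ≤ ∑ j : Fin m, y j.castSucc * q j := by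
      intro lam hlam
      have h1 : ∑ j : Fin m, y j.castSucc * (∑ i, W i j * lam i) ≤
          ∑ j : Fin m, y j.castSucc * q j :=
        Finset.sum_le_sum fun j _ => mul_le_mul_of_nonneg_left (hlam j) (hy0 _)
      have h2 : ∑ j : Fin m, y j.castSucc * (∑ i, W i j * lam i) = t * (∑ i, c i * lam i) := by
        calc ∑ j : Fin m, y j.castSucc * (∑ i, W i j * lam i)
            = ∑ j : Fin m, ∑ i, y j.castSucc * W i j * lam i := by
              refine Finset.sum_congr rfl fun j _ => ?_
              rw [Finset.mul_sum]
              exact Finset.sum_congr rfl fun i _ => by ring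
          _ = ∑ i, ∑ j : Fin m, y j.castSucc * W i j * lam i := Finset.sum_comm
          _ = ∑ i, (t * c i) * lam i := by
              refine Finset.sum_congr rfl fun i _ => ?_
              rw [← Finset.sum_mul, hyA' i]
          _ = t * (∑ i, c i * lam i) := by
              rw [Finset.mul_sum]
              exact Finset.sum_congr rfl fun i _ => by ring
      linarith [h1, h2]
    rcases eq_or_lt_of_le ht0 with hteq | htpos
    · obtain ⟨lam1, hlam1⟩ := hD
      have := hkey lam1 hlam1
      rw [← hteq] at this
      simp only [zero_mul] at this
      rw [← hteq] at hyb'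
      simp only [zero_mul] at hyb'
      linarith
    · have hub : ∀ s ∈ Svals, s ≤ (∑ j : Fin m, y j.castSucc * q j) / t := by
        rintro s ⟨lam, hlam, rfl⟩
        rw [le_div_iff₀ htpos]
        calc (∑ i, c i * lam i) * t = t * (∑ i, c i * lam i) := mul_comm _ _
        _ ≤ _ := hkey lam hlam
      have hvle : v ≤ (∑ j : Fin m, y j.castSucc * q j) / t := csSup_le hSne hub
      have : (∑ j : Fin m, y j.castSucc * q j) / t < v := by
        rw [div_lt_iff₀ htpos]
        linarith [hyb']
      linarith
  obtain ⟨lam0, hlam0, hvle⟩ := hfeas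
  refine ⟨lam0, hlam0, fun lam hlam => ?_⟩
  have : ∑ i, c i * lam i ≤ v := le_csSup hSbdd ⟨lam, hlam, rfl⟩
  linarith


end AuxPolyhedral


/-- The linear functional `ξ = (T,h) ↦ ⟨h - Tx, λ⟩` on `Ξ`. -/
noncomputable def phiCLM {l n : ℕ} (x : Fin n → ℝ) (lam : Fin l → ℝ) :
    Xi l n →L[ℝ] ℝ :=
  LinearMap.toContinuousLinearMap
  { toFun := fun p => ∑ i, (p.2 i - ∑ j, p.1 i j * x j) * lam i
    map_add' := by
      intro p p'
      simp only [Prod.fst_add, Prod.snd_add, Pi.add_apply]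
      rw [← Finset.sum_add_distrib]
      refine Finset.sum_congr rfl fun i _ => ?_
      rw [show ∑ j, (p.1 i j + p'.1 i j) * x j
          = ∑ j, p.1 i j * x j + ∑ j, p'.1 i j * x j by
        rw [← Finset.sum_add_distrib]
        exact Finset.sum_congr rfl fun j _ => add_mul _ _ _]
      ring
    map_smul' := by
      intro c p
      simp only [Prod.smul_fst, Prod.smul_snd, Pi.smul_apply, smul_eq_mul, RingHom.id_apply]
      rw [Finset.mul_sum]
      refine Finset.sum_congr rfl fun i _ => ?_
      rw [show ∑ j, (c * p.1 i j) * x j = c * ∑ j, p.1 i j * x j by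
        rw [Finset.mul_sum]
        exact Finset.sum_congr rfl fun j _ => mul_assoc _ _ _]
      ring }

lemma phiCLM_apply {l n : ℕ} (x : Fin n → ℝ) (lam : Fin l → ℝ) (p : Xi l n) :
    phiCLM x lam p = ∑ i, (p.2 i - ∑ j, p.1 i j * x j) * lam i := rfl

lemma phi_le_Qfun {l n m : ℕ} (W : Fin l → Fin m → ℝ) (q : Fin m → ℝ)
    (x : Fin n → ℝ) (p : Xi l n) {lam : Fin l → ℝ} (hlam : lam ∈ polyD W q) :
    ((phiCLM x lam p : ℝ) : EReal) ≤ Qfun W q x p := by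
  rw [Qfun]
  exact le_iSup₂_of_le lam hlam (le_refl _)

lemma Qfun_ne_bot {l n m : ℕ} (W : Fin l → Fin m → ℝ) (q : Fin m → ℝ)
    (hD : (polyD W q).Nonempty) (x : Fin n → ℝ) (p : Xi l n) :
    Qfun W q x p ≠ ⊥ := by
  obtain ⟨lam, hlam⟩ := hD
  exact fun h => absurd (h ▸ phi_le_Qfun W q x p hlam : ((phiCLM x lam p : ℝ) : EReal) ≤ ⊥) (not_le.mpr (EReal.bot_lt_coe _))

/-- Theorem 3, necessity: if the partition `Ps` is adapted to `x`,
i.e. `V_Ps(x) = V(x)`, then on every positive-probability cell `P ∈ Ps` some `λ_P ∈ D`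
attains the supremum `Q(x, ξ(ω))` a.e. -/
theorem cellwise_optimal_dual_of_adapted_partition
    {Ω : Type*} [MeasurableSpace Ω] {l n m : ℕ}
    (hl : 0 < l) (hn : 0 < n) (hm : 0 < m)
    (W : Fin l → Fin m → ℝ) (q : Fin m → ℝ) (hD : (polyD W q).Nonempty)
    (ℙ : Measure Ω) [IsProbabilityMeasure ℙ]
    (ξ : Ω → Xi l n) (hξmeas : Measurable ξ) (hξint : Integrable ξ ℙ)
    (x : Fin n → ℝ)
    (hQint : (∀ᵐ ω ∂ℙ, Qfun W q x (ξ ω) ≠ ⊤) ∧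
      Integrable (fun ω => (Qfun W q x (ξ ω)).toReal) ℙ)
    (Ps : Finset (Set (Xi l n))) (hPs : IsFinPartition Ps)
    (hadapt : Vpart W q ℙ ξ Ps x = Vtrue W q ℙ ξ x) :
    ∀ P ∈ Ps, 0 < ℙ (ξ ⁻¹' P) →
      ∃ lamP ∈ polyD W q, ∀ᵐ ω ∂ℙ, ξ ω ∈ P →
        ((∑ i, ((ξ ω).2 i - ∑ j, (ξ ω).1 i j * x j) * lamP i : ℝ) : EReal)
          = Qfun W q x (ξ ω) := by
  classical
  have hVtrue : Vtrue W q ℙ ξ x = ((∫ ω, (Qfun W q x (ξ ω)).toReal ∂ℙ : ℝ) : EReal) :=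
    if_pos hQint
  obtain ⟨hae_top, hint⟩ := hQint
  set Qt : Ω → ℝ := fun ω => (Qfun W q x (ξ ω)).toReal with hQtdef
  have hae_le : ∀ lam ∈ polyD W q, ∀ᵐ ω ∂ℙ, phiCLM x lam (ξ ω) ≤ Qt ω := by
    intro lam hlam
    filter_upwards [hae_top] with ω hω
    have h1 := phi_le_Qfun W q x (ξ ω) hlam
    have h2 : ((Qt ω : ℝ) : EReal) = Qfun W q x (ξ ω) :=
      EReal.coe_toReal hω (Qfun_ne_bot W q hD x (ξ ω))
    rw [← h2] at h1
    exact EReal.coe_le_coe_iff.mp h1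
  have hint_phi : ∀ lam : Fin l → ℝ, Integrable (fun ω => phiCLM x lam (ξ ω)) ℙ :=
    fun lam => (phiCLM x lam).integrable_comp hξint
  have hmeasP : ∀ P ∈ Ps, MeasurableSet (ξ ⁻¹' P) := fun P hP => hξmeas (hPs.1 P hP)
  set I : Set (Xi l n) → ℝ := fun P => ∫ ω in ξ ⁻¹' P, Qt ω ∂ℙ with hIdef
  have hμtop : ∀ P : Set (Xi l n), ℙ (ξ ⁻¹' P) ≠ ⊤ := fun P => measure_ne_top _ _
  have hphi_cond : ∀ (P : Set (Xi l n)), 0 < ℙ (ξ ⁻¹' P) → ∀ lam : Fin l → ℝ,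
      ∫ ω in ξ ⁻¹' P, phiCLM x lam (ξ ω) ∂ℙ
        = (ℙ (ξ ⁻¹' P)).toReal * phiCLM x lam (condMean ℙ ξ P) := by
    intro P hpos lam
    have h1 : ∫ ω in ξ ⁻¹' P, phiCLM x lam (ξ ω) ∂ℙ
        = phiCLM x lam (∫ ω in ξ ⁻¹' P, ξ ω ∂ℙ) :=
      (phiCLM x lam).integral_comp_comm hξint.restrict
    have hμ : (ℙ (ξ ⁻¹' P)).toReal ≠ 0 :=
      ne_of_gt (ENNReal.toReal_pos hpos.ne' (hμtop P))
    rw [h1, condMean, ContinuousLinearMap.map_smul, smul_eq_mul]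
    field_simp
  have hbound : ∀ (P : Set (Xi l n)), 0 < ℙ (ξ ⁻¹' P) → ∀ lam ∈ polyD W q,
      phiCLM x lam (condMean ℙ ξ P) ≤ (ℙ (ξ ⁻¹' P)).toReal⁻¹ * I P := by
    intro P hpos lam hlam
    have hμpos : 0 < (ℙ (ξ ⁻¹' P)).toReal := ENNReal.toReal_pos hpos.ne' (hμtop P)
    have hle : ∫ ω in ξ ⁻¹' P, phiCLM x lam (ξ ω) ∂ℙ ≤ I P :=
      integral_mono_ae (hint_phi lam).restrict hint.restrict
        (ae_restrict_of_ae (hae_le lam hlam))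
    rw [hphi_cond P hpos lam] at hle
    rw [inv_mul_eq_div, le_div_iff₀ hμpos]
    linarith [hle]
  have hQfun_le : ∀ (P : Set (Xi l n)), 0 < ℙ (ξ ⁻¹' P) →
      Qfun W q x (condMean ℙ ξ P) ≤ (((ℙ (ξ ⁻¹' P)).toReal⁻¹ * I P : ℝ) : EReal) := by
    intro P hpos
    rw [Qfun]
    exact iSup₂_le fun lam hlam => EReal.coe_le_coe_iff.mpr (hbound P hpos lam hlam)
  -- sum decomposition of the true value
  have hdisj : Set.Pairwise (↑Ps) (Function.onFun Disjoint fun P : Set (Xi l n) => ξ ⁻¹' P) :=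
    fun P hP P' hP' hne => Disjoint.preimage ξ (hPs.2.1 hP hP' hne)
  have hunion : (⋃ P ∈ Ps, ξ ⁻¹' P) = Set.univ := by
    have : (⋃ P ∈ Ps, ξ ⁻¹' P) = ξ ⁻¹' (⋃₀ (↑Ps : Set (Set (Xi l n)))) := by
      rw [Set.sUnion_eq_biUnion, Set.preimage_iUnion₂]
      simp
    rw [this, hPs.2.2, Set.preimage_univ]
  have hsplit : ∫ ω, Qt ω ∂ℙ = ∑ P ∈ Ps, I P := by
    rw [← MeasureTheory.setIntegral_univ, ← hunion]
    exact integral_biUnion_finset Ps (fun P hP => hmeasP P hP) hdisj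
      (fun P _ => hint.integrableOn)
  set tr : Set (Xi l n) → ℝ :=
    fun P => (ℙ (ξ ⁻¹' P)).toReal * (Qfun W q x (condMean ℙ ξ P)).toReal with htrdef
  have hterm : ∀ P ∈ Ps,
      (if 0 < ℙ (ξ ⁻¹' P) then
        ((ℙ (ξ ⁻¹' P)).toReal : EReal) * Qfun W q x (condMean ℙ ξ P) else 0)
        = ((tr P : ℝ) : EReal) := by
    intro P _
    by_cases hpos : 0 < ℙ (ξ ⁻¹' P)
    · rw [if_pos hpos]
      have h1 : Qfun W q x (condMean ℙ ξ P) ≠ ⊤ :=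
        ne_top_of_le_ne_top (EReal.coe_ne_top _) (hQfun_le P hpos)
      have h2 : Qfun W q x (condMean ℙ ξ P) ≠ ⊥ := Qfun_ne_bot W q hD x _
      conv_lhs => rw [← EReal.coe_toReal h1 h2]
      rw [← EReal.coe_mul]
    · rw [if_neg hpos]
      have h0 : ℙ (ξ ⁻¹' P) = 0 := by
        by_contra h; exact hpos (pos_iff_ne_zero.mpr h)
      simp [htrdef, h0]
  have hVpart : Vpart W q ℙ ξ Ps x = ((∑ P ∈ Ps, tr P : ℝ) : EReal) := by
    rw [Vpart, Finset.sum_congr rfl hterm]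
    exact (map_sum (⟨⟨Real.toEReal, EReal.coe_zero⟩, EReal.coe_add⟩ : ℝ →+ EReal) tr Ps).symm
  have hsum_eq : ∑ P ∈ Ps, tr P = ∑ P ∈ Ps, I P := by
    rw [hVpart, hVtrue] at hadapt
    have := EReal.coe_eq_coe_iff.mp hadapt
    rw [this, hsplit]
  have hle_tr : ∀ P ∈ Ps, tr P ≤ I P := by
    intro P _
    by_cases hpos : 0 < ℙ (ξ ⁻¹' P)
    · have hμpos : 0 < (ℙ (ξ ⁻¹' P)).toReal := ENNReal.toReal_pos hpos.ne' (hμtop P)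
      have h1 : Qfun W q x (condMean ℙ ξ P) ≠ ⊤ :=
        ne_top_of_le_ne_top (EReal.coe_ne_top _) (hQfun_le P hpos)
      have h2 : Qfun W q x (condMean ℙ ξ P) ≠ ⊥ := Qfun_ne_bot W q hD x _
      have h3 : (Qfun W q x (condMean ℙ ξ P)).toReal ≤ (ℙ (ξ ⁻¹' P)).toReal⁻¹ * I P := by
        have := hQfun_le P hpos
        rw [← EReal.coe_toReal h1 h2] at this
        exact EReal.coe_le_coe_iff.mp this
      calc tr P ≤ (ℙ (ξ ⁻¹' P)).toReal * ((ℙ (ξ ⁻¹' P)).toReal⁻¹ * I P) :=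
            mul_le_mul_of_nonneg_left h3 hμpos.le
        _ = I P := by field_simp
    · have h0 : ℙ (ξ ⁻¹' P) = 0 := by
        by_contra h; exact hpos (pos_iff_ne_zero.mpr h)
      have hI0 : I P = 0 := by
        have : ℙ.restrict (ξ ⁻¹' P) = 0 := Measure.restrict_eq_zero.mpr h0
        simp only [hIdef, this, integral_zero_measure]
      have htr0 : tr P = 0 := by simp [htrdef, h0]
      rw [hI0, htr0]
  have heach := (Finset.sum_eq_sum_iff_of_le hle_tr).mp hsum_eq
  -- final per-cell argument
  intro P hP hpos
  have hμpos : 0 < (ℙ (ξ ⁻¹' P)).toReal := ENNReal.toReal_pos hpos.ne' (hμtop P)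
  obtain ⟨lam0, hlam0, hmax⟩ := polyD_exists_max W q hD
    (fun i => (condMean ℙ ξ P).2 i - ∑ j, (condMean ℙ ξ P).1 i j * x j)
    ((ℙ (ξ ⁻¹' P)).toReal⁻¹ * I P)
    (fun lam hlam => hbound P hpos lam hlam)
  have hQeq : Qfun W q x (condMean ℙ ξ P) = ((phiCLM x lam0 (condMean ℙ ξ P) : ℝ) : EReal) := by
    refine le_antisymm ?_ (phi_le_Qfun W q x _ hlam0)
    rw [Qfun]
    exact iSup₂_le fun lam hlam => EReal.coe_le_coe_iff.mpr (hmax lam hlam)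
  have hsP : (Qfun W q x (condMean ℙ ξ P)).toReal = phiCLM x lam0 (condMean ℙ ξ P) := by
    rw [hQeq, EReal.toReal_coe]
  have hkey : (ℙ (ξ ⁻¹' P)).toReal * phiCLM x lam0 (condMean ℙ ξ P) = I P := by
    rw [← hsP]
    exact heach P hP
  have hintP : ∫ ω in ξ ⁻¹' P, (Qt ω - phiCLM x lam0 (ξ ω)) ∂ℙ = 0 := by
    rw [integral_sub hint.integrableOn (hint_phi lam0).integrableOn]
    rw [hphi_cond P hpos lam0, hkey]
    exact sub_self _
  have hnonneg : 0 ≤ᵐ[ℙ.restrict (ξ ⁻¹' P)] fun ω => Qt ω - phiCLM x lam0 (ξ ω) := by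
    filter_upwards [ae_restrict_of_ae (hae_le lam0 hlam0)] with ω h
    exact sub_nonneg.mpr h
  have hzero := (integral_eq_zero_iff_of_nonneg_ae hnonneg
    (hint.integrableOn.sub (hint_phi lam0).integrableOn)).mp hintP
  have hzero' := (ae_restrict_iff' (hmeasP P hP)).mp hzero
  refine ⟨lam0, hlam0, ?_⟩
  filter_upwards [hzero', hae_top] with ω h1 h2 hmemP
  have h3 : Qt ω - phiCLM x lam0 (ξ ω) = 0 := h1 hmemP
  have h4 : phiCLM x lam0 (ξ ω) = Qt ω := by linarith
  show ((∑ i, ((ξ ω).2 i - ∑ j, (ξ ω).1 i j * x j) * lam0 i : ℝ) : EReal) = Qfun W q x (ξ ω)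
  rw [show (∑ i, ((ξ ω).2 i - ∑ j, (ξ ω).1 i j * x j) * lam0 i) = phiCLM x lam0 (ξ ω) from rfl]
  rw [h4]
  exact EReal.coe_toReal h2 (Qfun_ne_bot W q hD x (ξ ω))

end
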